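/- Let L be a finite lattice containing, as a sublattice, a copy of M_k (for k ≥ 3) with bottom u, top v and atoms a₁,...,a_k, such that u is covered (in L) by each a_i. Then cd(L) ≤ 2^(−k). -/

import Mathlib

/-- A congruence of a lattice: an equivalence relation compatible with `⊔` and `⊓`. -/
structure LatCon (L : Type) [Lattice L] : Type where
  r : L → L → Prop
  refl : ∀ a, r a a
  symm : ∀ {a b}, r a b → r b a
  trans : ∀ {a b c}, r a b → r b c → r a c
  sup : ∀ {a b c d}, r a b → r c d → r (a ⊔ c) (b ⊔ d)
  inf : ∀ {a b c d}, r a b → r c d → r (a ⊓ c) (b ⊓ d)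

/-- The congruence density of a finite lattice `L`. -/
noncomputable def latCd (L : Type) [Lattice L] : ℝ :=
  (Nat.card (LatCon L) : ℝ) / 2 ^ (Nat.card L - 1)

namespace LatCon

variable {L : Type} [Lattice L]

protected theorem ext' {θ θ' : LatCon L} (h : θ.r = θ'.r) : θ = θ' := by
  cases θ; cases θ'; cases h; rfl

noncomputable instance finite [Finite L] : Finite (LatCon L) :=
  Finite.of_injective (fun θ : LatCon L => θ.r) (fun θ θ' h => LatCon.ext' h)

instance : PartialOrder (LatCon L) where
  le θ θ' := ∀ a b, θ.r a b → θ'.r a b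
  le_refl θ a b h := h
  le_trans θ₁ θ₂ θ₃ h h' a b hab := h' a b (h a b hab)
  le_antisymm θ θ' h h' := LatCon.ext' (by
    funext x y; exact propext ⟨h x y, h' x y⟩)

/-- the join of two congruences -/
def join (α β : LatCon L) : LatCon L where
  r := Relation.ReflTransGen (fun x y => α.r x y ∨ β.r x y)
  refl a := Relation.ReflTransGen.refl
  symm h := (haveI : Std.Symm (fun x y => α.r x y ∨ β.r x y) :=
    ⟨fun x y h => h.imp α.symm β.symm⟩; Std.Symm.symm _ _ h)
  trans h h' := h.trans h'
  sup {x y c d} h h' := by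
    have key : ∀ (c : L) {x y : L},
        Relation.ReflTransGen (fun x y => α.r x y ∨ β.r x y) x y →
        Relation.ReflTransGen (fun x y => α.r x y ∨ β.r x y) (x ⊔ c) (y ⊔ c) := by
      intro c x y h
      induction h with
      | refl => exact Relation.ReflTransGen.refl
      | tail h1 h2 ih =>
          exact ih.tail (h2.imp (fun hh => α.sup hh (α.refl c)) (fun hh => β.sup hh (β.refl c)))
    have h1 := key c h
    have h2 := key y h'
    rw [sup_comm c y, sup_comm d y] at h2
    exact h1.trans h2
  inf {x y c d} h h' := by
    have key : ∀ (c : L) {x y : L},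
        Relation.ReflTransGen (fun x y => α.r x y ∨ β.r x y) x y →
        Relation.ReflTransGen (fun x y => α.r x y ∨ β.r x y) (x ⊓ c) (y ⊓ c) := by
      intro c x y h
      induction h with
      | refl => exact Relation.ReflTransGen.refl
      | tail h1 h2 ih =>
          exact ih.tail (h2.imp (fun hh => α.inf hh (α.refl c)) (fun hh => β.inf hh (β.refl c)))
    have h1 := key c h
    have h2 := key y h'
    rw [inf_comm c y, inf_comm d y] at h2
    exact h1.trans h2

def meet (α β : LatCon L) : LatCon L where
  r x y := α.r x y ∧ β.r x y
  refl a := ⟨α.refl a, β.refl a⟩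
  symm h := ⟨α.symm h.1, β.symm h.2⟩
  trans h h' := ⟨α.trans h.1 h'.1, β.trans h.2 h'.2⟩
  sup h h' := ⟨α.sup h.1 h'.1, β.sup h.2 h'.2⟩
  inf h h' := ⟨α.inf h.1 h'.1, β.inf h.2 h'.2⟩

/-- a congruence collapses an interval whose endpoints it relates -/
theorem r_interval (θ : LatCon L) {x y c : L} (h : θ.r x y) (hx : x ≤ c) (hc : c ≤ y) :
    θ.r x c := by
  have h1 := θ.inf h (θ.refl c)
  rw [inf_of_le_left hx, inf_of_le_right hc] at h1
  exact h1

theorem r_inf_sup (θ : LatCon L) {x y : L} (h : θ.r x y) : θ.r (x ⊓ y) (x ⊔ y) := by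
  have h1 : θ.r (x ⊓ y) (y ⊓ y) := θ.inf h (θ.refl y)
  rw [inf_idem] at h1
  have h3 : θ.r (y ⊔ y) (x ⊔ y) := θ.sup (θ.symm h) (θ.refl y)
  rw [sup_idem] at h3
  exact θ.trans h1 h3

theorem r_of_r_inf_sup (θ : LatCon L) {x y : L} (h : θ.r (x ⊓ y) (x ⊔ y)) : θ.r x y :=
  θ.trans (θ.symm (θ.r_interval h inf_le_left le_sup_left))
    (θ.r_interval h inf_le_right le_sup_right)


instance : Lattice (LatCon L) where
  sup := join
  inf := meet
  le_sup_left α β x y h := Relation.ReflTransGen.single (Or.inl h)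
  le_sup_right α β x y h := Relation.ReflTransGen.single (Or.inr h)
  sup_le α β γ hα hβ x y h := by
    induction h with
    | refl => exact γ.refl x
    | tail h1 h2 ih => exact γ.trans ih (h2.elim (hα _ _) (hβ _ _))
  inf_le_left α β x y h := h.1
  inf_le_right α β x y h := h.2
  le_inf α β γ hβ hγ x y h := ⟨hβ x y h, hγ x y h⟩

theorem inf_sup_weave (θ φ ψ : LatCon L) : θ ⊓ (φ ⊔ ψ) ≤ (θ ⊓ φ) ⊔ (θ ⊓ ψ) := by
  intro p q hpq
  obtain ⟨hθ, hφψ⟩ := hpq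
  set x := p ⊓ q with hx
  set y := p ⊔ q with hy
  have hθxy : θ.r x y := θ.r_inf_sup hθ
  have hxy : x ≤ y := inf_le_left.trans le_sup_left
  have hchain : Relation.ReflTransGen (fun a b => φ.r a b ∨ ψ.r a b) x y :=
    (φ.join ψ).r_inf_sup hφψ
  -- truncation
  have key : ∀ c d : L, Relation.ReflTransGen (fun a b => φ.r a b ∨ ψ.r a b) c d →
      Relation.ReflTransGen (fun a b => (θ.meet φ).r a b ∨ (θ.meet ψ).r a b)
        ((c ⊔ x) ⊓ y) ((d ⊔ x) ⊓ y) := by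
    intro c d h
    induction h with
    | refl => exact Relation.ReflTransGen.refl
    | tail h1 h2 ih =>
        rename_i b' b
        have hmem : ∀ z : L, x ≤ (z ⊔ x) ⊓ y ∧ (z ⊔ x) ⊓ y ≤ y :=
          fun z => ⟨le_inf le_sup_right hxy, inf_le_right⟩
        have hθ' : θ.r ((b' ⊔ x) ⊓ y) ((b ⊔ x) ⊓ y) := by
          have t1 : θ.r x ((b' ⊔ x) ⊓ y) := θ.r_interval hθxy (hmem b').1 (hmem b').2
          have t2 : θ.r x ((b ⊔ x) ⊓ y) := θ.r_interval hθxy (hmem b).1 (hmem b).2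
          exact θ.trans (θ.symm t1) t2
        refine ih.tail ?_
        rcases h2 with h2 | h2
        · exact Or.inl ⟨hθ', φ.inf (φ.sup h2 (φ.refl x)) (φ.refl y)⟩
        · exact Or.inr ⟨hθ', ψ.inf (ψ.sup h2 (ψ.refl x)) (ψ.refl y)⟩
  have hk := key x y hchain
  rw [sup_idem, inf_of_le_left hxy, sup_of_le_left hxy, inf_idem] at hk
  exact ((θ ⊓ φ) ⊔ (θ ⊓ ψ) : LatCon L).r_of_r_inf_sup hk

instance : DistribLattice (LatCon L) where
  le_sup_inf x y z := by
    calc (x ⊔ y) ⊓ (x ⊔ z) ≤ ((x ⊔ y) ⊓ x) ⊔ ((x ⊔ y) ⊓ z) := inf_sup_weave _ _ _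
    _ = x ⊔ ((x ⊔ y) ⊓ z) := by rw [inf_of_le_right le_sup_left]
    _ ≤ x ⊔ ((z ⊓ x) ⊔ (z ⊓ y)) := by
        refine sup_le_sup_left ?_ x
        rw [inf_comm]
        exact inf_sup_weave _ _ _
    _ ≤ x ⊔ (y ⊓ z) := by
        refine sup_le le_sup_left (sup_le ?_ ?_)
        · exact le_sup_of_le_left inf_le_right
        · exact le_sup_of_le_right (by rw [inf_comm])

end LatCon


/-- A finite distributive lattice all of whose `<`-chains have length `≤ m + 1`
has at most `2 ^ m` elements. -/
theorem card_le_of_chains (m : ℕ) :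
    ∀ (D : Type) [DistribLattice D] [Finite D] [Nonempty D],
      (∀ l : List D, l.Chain' (· < ·) → l.length ≤ m + 1) → Nat.card D ≤ 2 ^ m := by
  induction m with
  | zero =>
      intro D _ _ _ hch
      by_contra hcard
      push_neg at hcard
      have hnt : Nontrivial D := by
        rw [← Finite.one_lt_card_iff_nontrivial]; omega
      obtain ⟨x, y, hxy⟩ := hnt
      have hlt : x ⊓ y < x ∨ x ⊓ y < y := by
        rcases lt_or_eq_of_le (inf_le_left : x ⊓ y ≤ x) with h | h
        · exact Or.inl h
        rcases lt_or_eq_of_le (inf_le_right : x ⊓ y ≤ y) with h' | h'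
        · exact Or.inr h'
        · exact absurd (h ▸ h') hxy
      rcases hlt with h | h
      · have := hch [x ⊓ y, x] (List.isChain_pair.mpr h); simp at this
      · have := hch [x ⊓ y, y] (List.isChain_pair.mpr h); simp at this
  | succ m ih =>
      intro D _ _ _ hch
      by_cases hcard : Nat.card D ≤ 1
      · calc Nat.card D ≤ 1 := hcard
        _ ≤ 2 ^ (m + 1) := Nat.one_le_two_pow
      push_neg at hcard
      have hnt : Nontrivial D := by rw [← Finite.one_lt_card_iff_nontrivial]; omega
      classical
      have : Fintype D := Fintype.ofFinite D
      -- bottom element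
      set b : D := Finset.univ.inf' Finset.univ_nonempty id with hb
      have hble : ∀ x : D, b ≤ x := fun x => Finset.inf'_le id (Finset.mem_univ x)
      -- an atom
      have hSne : {x : D | x ≠ b}.Nonempty := by
        obtain ⟨x, y, hxy⟩ := hnt
        by_cases hx : x = b
        · exact ⟨y, by simp [Set.mem_setOf_eq, hx ▸ hxy.symm]⟩
        · exact ⟨x, hx⟩
      obtain ⟨a, ha, hamin⟩ : ∃ a ∈ {x : D | x ≠ b}, ∀ a' ∈ {x : D | x ≠ b}, id a' ≤ id a →
          id a = id a' := by
        obtain ⟨a, ha, h⟩ := (Set.toFinite {x : D | x ≠ b}).exists_minimal hSne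
        exact ⟨a, ha, fun a' ha' hle => le_antisymm (h ha' hle) hle⟩
      have hba : b < a := lt_of_le_of_ne (hble a) (Ne.symm ha)
      have hatom : ∀ x : D, x ⊓ a = b ∨ x ⊓ a = a := by
        intro x
        rcases lt_or_eq_of_le (inf_le_right : x ⊓ a ≤ a) with h | h
        · left
          by_contra hne
          exact absurd (hamin _ hne (le_of_lt h)) (ne_of_gt h)
        · right; exact h
      -- the injection
      set S := {z : D // a ≤ z} with hS
      haveI hSinst : Nonempty S := ⟨⟨a, le_rfl⟩⟩
      letI instL : Lattice S := Subtype.lattice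
        (fun x y hx _ => le_trans hx le_sup_left) (fun x y hx hy => le_inf hx hy)
      letI instS : DistribLattice S :=
        { instL with
          le_sup_inf := fun x y z =>
            show ((x:D) ⊔ (y:D)) ⊓ ((x:D) ⊔ (z:D)) ≤ (x:D) ⊔ ((y:D) ⊓ (z:D)) from le_sup_inf }
      have hinj : Function.Injective (fun x : D => ((⟨x ⊔ a, le_sup_right⟩ : S), a ≤ x)) := by
        intro x y hxy
        simp only [Prod.mk.injEq, Subtype.mk.injEq, eq_iff_iff] at hxy
        obtain ⟨hsup, hiff⟩ := hxy
        have hxa : x ⊓ a = y ⊓ a := by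
          by_cases hax : a ≤ x
          · rw [inf_eq_right.mpr hax, inf_eq_right.mpr (hiff.mp hax)]
          · have hay : ¬ a ≤ y := fun h => hax (hiff.mpr h)
            have h1 : x ⊓ a = b := by
              rcases hatom x with h | h
              · exact h
              · exact absurd (inf_eq_right.mp h) hax
            have h2 : y ⊓ a = b := by
              rcases hatom y with h | h
              · exact h
              · exact absurd (inf_eq_right.mp h) hay
            rw [h1, h2]
        have ex : x = (x ⊓ y) ⊔ (x ⊓ a) := by
          conv_lhs => rw [← inf_eq_left.mpr (le_sup_left : x ≤ x ⊔ a), hsup, inf_sup_left]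
        have ey : y = (x ⊓ y) ⊔ (y ⊓ a) := by
          conv_lhs => rw [← inf_eq_left.mpr (le_sup_left : y ≤ y ⊔ a), ← hsup, inf_sup_left,
            inf_comm y x]
        calc x = (x ⊓ y) ⊔ (x ⊓ a) := ex
        _ = (x ⊓ y) ⊔ (y ⊓ a) := by rw [hxa]
        _ = y := ey.symm
      have hcount : Nat.card D ≤ Nat.card S * 2 := by
        calc Nat.card D ≤ Nat.card (S × Prop) := Nat.card_le_card_of_injective _ hinj
        _ = Nat.card S * 2 := by rw [Nat.card_prod]; norm_num [Nat.card_eq_fintype_card]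
      -- chain condition on S
      have hchS : ∀ l : List S, l.Chain' (· < ·) → l.length ≤ m + 1 := by
        intro l hl
        rcases l with _ | ⟨z, l⟩
        · simp
        have hmapchain : ((z :: l).map (fun x : S => (x : D))).Chain' (· < ·) := by
          rw [List.Chain', List.isChain_map]
          exact hl
        have hchain : (b :: (z :: l).map (fun x : S => (x : D))).Chain' (· < ·) := by
          simp only [List.Chain', List.map_cons, List.isChain_cons_cons]
          refine ⟨lt_of_lt_of_le hba z.2, ?_⟩
          simpa [List.Chain'] using hmapchain
        have hlen := hch _ hchain
        simp only [List.length_cons, List.length_map] at hlen ⊢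
        omega
      have := ih S hchS
      omega


namespace LatCon

variable {L : Type} [Lattice L]

/-- the setoid of a congruence -/
def std (θ : LatCon L) : Setoid L := ⟨θ.r, ⟨θ.refl, fun h => θ.symm h, fun h h' => θ.trans h h'⟩⟩

theorem std_rel (θ : LatCon L) {x y : L} :
    (Quotient.mk (θ.std) x = Quotient.mk (θ.std) y) ↔ θ.r x y := by
  rw [Quotient.eq]; rfl

/-- the number of congruence classes -/
noncomputable def cQ [Finite L] (θ : LatCon L) : ℕ := Nat.card (Quotient θ.std)

theorem le_def {θ θ' : LatCon L} : θ ≤ θ' ↔ ∀ x y, θ.r x y → θ'.r x y := Iff.rfl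

end LatCon

theorem card_lt_of_surj_not_inj {A B : Type} [Finite A] (f : A → B)
    (hs : Function.Surjective f) (hn : ¬ Function.Injective f) :
    Nat.card B < Nat.card A := by
  obtain ⟨s, hsec⟩ := hs.hasRightInverse
  have hsinj : Function.Injective s := fun p q h => by
    rw [← hsec p, ← hsec q, h]
  have hsns : ¬ Function.Surjective s := by
    intro hss
    refine hn fun x y hxy => ?_
    obtain ⟨p, rfl⟩ := hss x
    obtain ⟨q, rfl⟩ := hss y
    rw [hsec p, hsec q] at hxy
    rw [hxy]
  haveI : Finite B := Finite.of_surjective f hs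
  simp only [Function.Surjective, not_forall] at hsns
  obtain ⟨x0, hx0⟩ := hsns
  push_neg at hx0
  have hFinj : Function.Injective (fun o : Option B => o.elim x0 s) := by
    intro o o' h
    match o, o' with
    | none, none => rfl
    | none, some b => exact absurd h.symm (hx0 b)
    | some b, none => exact absurd h (hx0 b)
    | some b, some b' => rw [hsinj h]
  have := Nat.card_le_card_of_injective _ hFinj
  rwa [Finite.card_option, Nat.add_one_le_iff] at this

section MkSection

variable {L : Type} [Lattice L] {k : ℕ}

theorem Mk_propagate (u v : L) (a : Fin k → L) (hk : 3 ≤ k)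
    (hcov : ∀ i, u ⋖ a i)
    (hsup : ∀ i j, i ≠ j → a i ⊔ a j = v)
    (hinf : ∀ i j, i ≠ j → a i ⊓ a j = u)
    (θ : LatCon L) {i : Fin k} (h : θ.r u (a i)) : ∀ j, θ.r u (a j) := by
  intro j
  by_cases hij : j = i
  · rwa [hij]
  -- pick l ≠ i, j
  obtain ⟨l, hli, hlj⟩ : ∃ l : Fin k, l ≠ i ∧ l ≠ j := by
    have h0 : (0 : ℕ) < k := by omega
    have h1 : (1 : ℕ) < k := by omega
    have h2 : (2 : ℕ) < k := by omega
    by_cases hi0 : i = ⟨0, h0⟩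
    · by_cases hj1 : j = ⟨1, h1⟩
      · exact ⟨⟨2, h2⟩, by rw [hi0]; intro hh; exact absurd (Fin.mk.injEq .. ▸ hh) (by simp),
          by rw [hj1]; intro hh; exact absurd (Fin.mk.injEq .. ▸ hh) (by simp)⟩
      · exact ⟨⟨1, h1⟩, by rw [hi0]; intro hh; exact absurd (Fin.mk.injEq .. ▸ hh) (by simp),
          fun hh => hj1 hh.symm⟩
    · by_cases hj0 : j = ⟨0, h0⟩
      · by_cases hi1 : i = ⟨1, h1⟩
        · exact ⟨⟨2, h2⟩, by rw [hi1]; intro hh; exact absurd (Fin.mk.injEq .. ▸ hh) (by simp),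
            by rw [hj0]; intro hh; exact absurd (Fin.mk.injEq .. ▸ hh) (by simp)⟩
        · exact ⟨⟨1, h1⟩, fun hh => hi1 hh.symm,
            by rw [hj0]; intro hh; exact absurd (Fin.mk.injEq .. ▸ hh) (by simp)⟩
      · exact ⟨⟨0, h0⟩, fun hh => hi0 hh.symm, fun hh => hj0 hh.symm⟩
  -- a l θ v
  have h1 : θ.r (a l ⊔ u) (a l ⊔ a i) := θ.sup (θ.refl (a l)) h
  rw [sup_eq_left.mpr (hcov l).le, hsup l i hli] at h1
  -- u θ a j
  have h2 : θ.r (a j ⊓ a l) (a j ⊓ v) := θ.inf (θ.refl (a j)) h1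
  have hjv : a j ≤ v := (hsup j l (fun hh => hlj hh.symm)) ▸ le_sup_left
  rw [hinf j l (fun hh => hlj hh.symm), inf_eq_left.mpr hjv] at h2
  exact h2

theorem Mk_top (u v : L) (a : Fin k → L) (hk : 3 ≤ k)
    (hcov : ∀ i, u ⋖ a i)
    (hsup : ∀ i j, i ≠ j → a i ⊔ a j = v)
    (hinf : ∀ i j, i ≠ j → a i ⊓ a j = u)
    (θ : LatCon L) {i : Fin k} (h : θ.r u (a i)) : θ.r u v := by
  have h01 : (⟨0, by omega⟩ : Fin k) ≠ ⟨1, by omega⟩ := by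
    intro hh; exact absurd (Fin.mk.injEq .. ▸ hh) (by simp)
  have h0 := Mk_propagate u v a hk hcov hsup hinf θ h ⟨0, by omega⟩
  have h1 := Mk_propagate u v a hk hcov hsup hinf θ h ⟨1, by omega⟩
  have h2 : θ.r (u ⊔ u) (a ⟨0, by omega⟩ ⊔ a ⟨1, by omega⟩) := θ.sup h0 h1
  rwa [sup_idem, hsup _ _ h01] at h2

end MkSection

def LatCon.eqCon (L : Type) [Lattice L] : LatCon L where
  r := Eq
  refl a := rfl
  symm h := h.symm
  trans h h' := h.trans h'
  sup h h' := by rw [h, h']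
  inf h h' := by rw [h, h']

/-- If a finite lattice `L` contains a copy of `M_k` (`k ≥ 3`) with bottom `u`, top `v`
and atoms `a 0, …, a (k-1)`, such that `u` is covered in `L` by each `a i`, then
`cd L ≤ 2 ^ (−k)`. -/
theorem latCd_le_of_Mk (L : Type) [Lattice L] [Finite L] (k : ℕ) (hk : 3 ≤ k)
    (u v : L) (a : Fin k → L)
    (hcov : ∀ i, u ⋖ a i)
    (hsup : ∀ i j, i ≠ j → a i ⊔ a j = v)
    (hinf : ∀ i j, i ≠ j → a i ⊓ a j = u) :
    latCd L ≤ (2 : ℝ) ^ (-(k : ℤ)) := by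

  classical
  haveI : Nonempty L := ⟨u⟩
  set i0 : Fin k := ⟨0, by omega⟩ with hi0
  set n := Nat.card L with hn_def
  -- distinctness
  have hua : ∀ i, u < a i := fun i => (hcov i).lt
  have hpick : ∀ i : Fin k, ∃ j : Fin k, j ≠ i := by
    intro i
    by_cases hi : i = ⟨0, by omega⟩
    · exact ⟨⟨1, by omega⟩, by rw [hi]; exact Fin.ne_of_val_ne (by simp)⟩
    · exact ⟨⟨0, by omega⟩, fun hh => hi hh.symm⟩
  have hav : ∀ i, a i < v := by
    intro i
    obtain ⟨j, hj⟩ := hpick i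
    have hle : a i ≤ v := (hsup i j (fun hh => hj hh.symm)) ▸ le_sup_left
    refine lt_of_le_of_ne hle fun hee => ?_
    have : a j ≤ a i := hee ▸ ((hsup j i hj) ▸ le_sup_left)
    have h2 : a i ⊓ a j = a j := inf_eq_right.mpr this
    rw [hinf i j fun hh => hj hh.symm] at h2
    exact (hua j).ne h2
  have huv : u < v := (hua i0).trans (hav i0)
  have hainj : ∀ i j : Fin k, a i = a j → i = j := by
    intro i j h
    by_contra hij
    have := hinf i j hij
    rw [h, inf_idem] at this
    exact (hua j).ne' this
  -- n ≥ k + 2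
  have hnk : k + 2 ≤ n := by
    have hFinj : Function.Injective
        (fun o : Option (Option (Fin k)) => o.elim u (fun o' => o'.elim v a)) := by
      intro o o' h
      match o, o' with
      | none, none => rfl
      | none, some none => exact absurd h huv.ne
      | some none, none => exact absurd h huv.ne'
      | none, some (some j) => exact absurd h (hua j).ne
      | some (some j), none => exact absurd h (hua j).ne'
      | some none, some none => rfl
      | some none, some (some j) => exact absurd h (hav j).ne'
      | some (some j), some none => exact absurd h (hav j).ne
      | some (some i), some (some j) => rw [hainj i j h]
    have := Nat.card_le_card_of_injective _ hFinj
    simp [Finite.card_option, Nat.card_eq_fintype_card] at this; omega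
  -- separation lemmas
  have sep1 : ∀ θ : LatCon L, ¬ θ.r u (a i0) → ∀ j, ¬ θ.r u (a j) :=
    fun θ hθ j hj => hθ (Mk_propagate u v a hk hcov hsup hinf θ hj i0)
  have sep2 : ∀ θ : LatCon L, ¬ θ.r u (a i0) → ∀ i j, i ≠ j → ¬ θ.r (a i) (a j) := by
    intro θ hθ i j hij h
    have h2 := θ.inf h (θ.refl (a j))
    rw [hinf i j hij, inf_idem] at h2
    exact sep1 θ hθ j h2
  have sep3 : ∀ θ : LatCon L, ¬ θ.r u (a i0) → ¬ θ.r u v :=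
    fun θ hθ h => sep1 θ hθ i0 (θ.r_interval h (hua i0).le (hav i0).le)
  have sep4 : ∀ θ : LatCon L, ¬ θ.r u (a i0) → ∀ i, ¬ θ.r (a i) v := by
    intro θ hθ i h
    obtain ⟨j, hj⟩ := hpick i
    have h2 := θ.inf h (θ.refl (a j))
    rw [hinf i j (fun hh => hj hh.symm), inf_eq_right.mpr (hav j).le] at h2
    exact sep1 θ hθ j h2
  -- counting lemmas
  have count_pos : ∀ θ : LatCon L, 1 ≤ θ.cQ := by
    intro θ
    have : Nonempty (Quotient θ.std) := ⟨Quotient.mk θ.std u⟩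
    exact Nat.card_pos
  have count_le' : ∀ θ : LatCon L, θ.cQ ≤ n := by
    intro θ
    exact Nat.card_le_card_of_surjective (Quotient.mk θ.std) (Quotient.mk_surjective (s := θ.std))
  -- the canonical surjection between quotients
  have hν : ∀ θ θ' : LatCon L, θ ≤ θ' →
      ∃ ν : Quotient θ.std → Quotient θ'.std,
        (∀ x : L, ν (Quotient.mk θ.std x) = Quotient.mk θ'.std x) := by
    intro θ θ' hle
    refine ⟨Quotient.lift (fun x => Quotient.mk θ'.std x) ?_, fun x => rfl⟩
    intro x y hxy
    exact (θ'.std_rel).mpr (hle x y hxy)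
  have count_lt : ∀ θ θ' : LatCon L, θ < θ' → θ'.cQ < θ.cQ := by
    intro θ θ' hlt
    obtain ⟨ν, hν'⟩ := hν θ θ' hlt.le
    have hsurj : Function.Surjective ν := by
      intro q
      refine ⟨Quotient.mk θ.std q.out, ?_⟩
      rw [hν', Quotient.out_eq]
    have hninj : ¬ Function.Injective ν := by
      intro hinj
      refine hlt.ne (le_antisymm hlt.le fun x y hxy => ?_)
      have : ν (Quotient.mk θ.std x) = ν (Quotient.mk θ.std y) := by
        rw [hν', hν']
        exact (θ'.std_rel).mpr hxy
      have := hinj this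
      exact (θ.std_rel).mp this
    exact card_lt_of_surj_not_inj ν hsurj hninj
  have count_ge : ∀ θ : LatCon L, ¬ θ.r u (a i0) → k + 1 ≤ θ.cQ := by
    intro θ hθ
    have hFinj : Function.Injective
        (fun o : Option (Fin k) => o.elim (Quotient.mk θ.std u) (fun j => Quotient.mk θ.std (a j))) := by
      intro o o' h
      match o, o' with
      | none, none => rfl
      | none, some j => exact absurd ((θ.std_rel).mp h) (sep1 θ hθ j)
      | some j, none => exact absurd ((θ.std_rel).mp h.symm) (sep1 θ hθ j)
      | some i, some j => by_contra hne
                          exact sep2 θ hθ i j (by intro hh; apply hne; rw [hh])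
                            ((θ.std_rel).mp h)
    have := Nat.card_le_card_of_injective _ hFinj
    simp [Finite.card_option, Nat.card_eq_fintype_card] at this; unfold LatCon.cQ; omega
  have count_le : ∀ θ : LatCon L, θ.r u (a i0) → θ.cQ + (k + 1) ≤ n := by
    intro θ hθ
    have hall : ∀ j, θ.r u (a j) := Mk_propagate u v a hk hcov hsup hinf θ hθ
    have htop : θ.r u v := Mk_top u v a hk hcov hsup hinf θ hθ
    set g : Quotient θ.std → L :=
      fun q => if q = Quotient.mk θ.std u then u else q.out with hg
    have gval : ∀ q, Quotient.mk θ.std (g q) = q := by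
      intro q
      rw [hg]
      by_cases hq : q = Quotient.mk θ.std u
      · simp [hq]
      · simp [hq, Quotient.out_eq]
    have hFinj : Function.Injective
        (fun o : Quotient θ.std ⊕ Option (Fin k) =>
          Sum.elim g (fun o' => o'.elim v a) o) := by
      have hgu : g (Quotient.mk θ.std u) = u := by simp [hg]
      have gnv : ∀ q, g q ≠ v := by
        intro q hq
        have h1 : q = Quotient.mk θ.std v := by rw [← hq, gval]
        have h2 : q = Quotient.mk θ.std u :=
          h1.trans ((θ.std_rel).mpr (θ.symm htop))
        rw [h2, hgu] at hq
        exact huv.ne hq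
      have gna : ∀ q j, g q ≠ a j := by
        intro q j hq
        have h1 : q = Quotient.mk θ.std (a j) := by rw [← hq, gval]
        have h2 : q = Quotient.mk θ.std u :=
          h1.trans ((θ.std_rel).mpr (θ.symm (hall j)))
        rw [h2, hgu] at hq
        exact (hua j).ne hq
      intro o o' h
      match o, o' with
      | .inl q, .inl q' =>
          simp only [Sum.elim_inl] at h
          rw [show q = q' from by rw [← gval q, ← gval q', h]]
      | .inl q, .inr none => exact absurd h (gnv q)
      | .inr none, .inl q => exact absurd h.symm (gnv q)
      | .inl q, .inr (some j) => exact absurd h (gna q j)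
      | .inr (some j), .inl q => exact absurd h.symm (gna q j)
      | .inr none, .inr none => rfl
      | .inr none, .inr (some j) => exact absurd h (hav j).ne'
      | .inr (some j), .inr none => exact absurd h (hav j).ne
      | .inr (some i), .inr (some j) =>
          simp only [Sum.elim_inr] at h
          rw [hainj i j h]
    have := Nat.card_le_card_of_injective _ hFinj
    simp [Nat.card_sum, Finite.card_option, Nat.card_eq_fintype_card] at this; unfold LatCon.cQ; omega
  -- merging bound
  have count_merge : ∀ θ θ' : LatCon L, θ ≤ θ' → ¬ θ.r u (a i0) → θ'.r u (a i0) →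
      θ'.cQ + (k + 1) ≤ θ.cQ := by
    intro θ θ' hle hθ hθ'
    obtain ⟨ν, hν'⟩ := hν θ θ' hle
    have hall' : ∀ j, θ'.r u (a j) := Mk_propagate u v a hk hcov hsup hinf θ' hθ'
    have htop' : θ'.r u v := Mk_top u v a hk hcov hsup hinf θ' hθ'
    set s : Quotient θ'.std → Quotient θ.std :=
      fun q => if q = Quotient.mk θ'.std u then Quotient.mk θ.std u
        else Quotient.mk θ.std q.out with hs
    have hsu : s (Quotient.mk θ'.std u) = Quotient.mk θ.std u := by simp [hs]
    have hνs : ∀ q, ν (s q) = q := by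
      intro q
      by_cases hq : q = Quotient.mk θ'.std u
      · rw [hq, hsu, hν']
      · rw [hs]
        simp only [if_neg hq, hν', Quotient.out_eq]
    have snv : ∀ q, s q ≠ Quotient.mk θ.std v := by
      intro q hq
      have h1 : q = Quotient.mk θ'.std v := by rw [← hνs q, hq, hν']
      have h2 : q = Quotient.mk θ'.std u :=
        h1.trans ((θ'.std_rel).mpr (θ'.symm htop'))
      rw [h2, hsu] at hq
      exact sep3 θ hθ ((θ.std_rel).mp hq)
    have sna : ∀ q j, s q ≠ Quotient.mk θ.std (a j) := by
      intro q j hq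
      have h1 : q = Quotient.mk θ'.std (a j) := by rw [← hνs q, hq, hν']
      have h2 : q = Quotient.mk θ'.std u :=
        h1.trans ((θ'.std_rel).mpr (θ'.symm (hall' j)))
      rw [h2, hsu] at hq
      exact sep1 θ hθ j ((θ.std_rel).mp hq)
    have hsinj : Function.Injective s := by
      intro q q' h
      rw [← hνs q, ← hνs q', h]
    have hFinj : Function.Injective
        (fun o : Quotient θ'.std ⊕ Option (Fin k) =>
          Sum.elim s (fun o' => o'.elim (Quotient.mk θ.std v)
            (fun j => Quotient.mk θ.std (a j))) o) := by
      intro o o' h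
      match o, o' with
      | .inl q, .inl q' => rw [hsinj h]
      | .inl q, .inr none => exact absurd h (snv q)
      | .inr none, .inl q => exact absurd h.symm (snv q)
      | .inl q, .inr (some j) => exact absurd h (sna q j)
      | .inr (some j), .inl q => exact absurd h.symm (sna q j)
      | .inr none, .inr none => rfl
      | .inr none, .inr (some j) =>
          exact absurd (θ.symm ((θ.std_rel).mp h)) (sep4 θ hθ j)
      | .inr (some j), .inr none =>
          exact absurd (θ.symm ((θ.std_rel).mp h.symm)) (sep4 θ hθ j)
      | .inr (some i), .inr (some j) =>
          simp only [Sum.elim_inr] at h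
          by_contra hne
          have hij : i ≠ j := by intro hh; apply hne; rw [hh]
          exact sep2 θ hθ i j hij ((θ.std_rel).mp h)
    have := Nat.card_le_card_of_injective _ hFinj
    simp [Nat.card_sum, Finite.card_option, Nat.card_eq_fintype_card] at this; unfold LatCon.cQ; omega
  -- the potential function
  set f : LatCon L → ℕ := fun θ => if θ.r u (a i0) then θ.cQ else θ.cQ - k with hf
  have flb : ∀ θ, 1 ≤ f θ := by
    intro θ
    rw [hf]
    by_cases hθ : θ.r u (a i0)
    · simp only [if_pos hθ]; exact count_pos θ
    · simp only [if_neg hθ]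
      have := count_ge θ hθ
      omega
  have fub : ∀ θ, f θ ≤ n - k := by
    intro θ
    rw [hf]
    by_cases hθ : θ.r u (a i0)
    · simp only [if_pos hθ]
      have := count_le θ hθ
      omega
    · simp only [if_neg hθ]
      have := count_le' θ
      omega
  have fdec : ∀ θ θ' : LatCon L, θ < θ' → f θ' < f θ := by
    intro θ θ' hlt
    rw [hf]
    by_cases hθ : θ.r u (a i0)
    · have hθ' : θ'.r u (a i0) := hlt.le u (a i0) hθ
      simp only [if_pos hθ, if_pos hθ']
      exact count_lt θ θ' hlt
    · simp only [if_neg hθ]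
      by_cases hθ' : θ'.r u (a i0)
      · simp only [if_pos hθ']
        have h1 := count_merge θ θ' hlt.le hθ hθ'
        have h2 := count_ge θ hθ
        omega
      · simp only [if_neg hθ']
        have h1 := count_lt θ θ' hlt
        have h2 := count_ge θ' hθ'
        omega
  -- chain bound
  have chaux : ∀ (l : List (LatCon L)) (x : LatCon L),
      (x :: l).Chain' (· < ·) → l.length < f x := by
    intro l
    induction l with
    | nil => intro x _; exact flb x
    | cons y l ih =>
        intro x hch
        rw [List.Chain', List.isChain_cons_cons] at hch
        have h1 := ih y hch.2
        have h2 := fdec x y hch.1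
        simp only [List.length_cons]
        omega
  have chb : ∀ l : List (LatCon L), l.Chain' (· < ·) → l.length ≤ (n - 1 - k) + 1 := by
    intro l hl
    rcases l with _ | ⟨x, l⟩
    · simp
    · have h1 := chaux l x hl
      have h2 := fub x
      simp only [List.length_cons]
      omega
  haveI : Nonempty (LatCon L) := ⟨LatCon.eqCon L⟩
  have hcard : Nat.card (LatCon L) ≤ 2 ^ (n - 1 - k) :=
    card_le_of_chains (n - 1 - k) (LatCon L) chb
  -- final arithmetic
  rw [latCd, ← hn_def]
  rw [div_le_iff₀ (by positivity)]
  have hpow : (2 : ℝ) ^ (-(k : ℤ)) * 2 ^ (n - 1) = 2 ^ (n - 1 - k) := by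
    rw [show ((2 : ℝ) ^ (n - 1) : ℝ) = (2 : ℝ) ^ ((n - 1 : ℕ) : ℤ) from (zpow_natCast 2 (n-1)).symm,
      show ((2 : ℝ) ^ (n - 1 - k) : ℝ) = (2 : ℝ) ^ ((n - 1 - k : ℕ) : ℤ) from
        (zpow_natCast 2 (n-1-k)).symm,
      ← zpow_add₀ (two_ne_zero)]
    congr 1
    omega
  rw [hpow]
  calc (Nat.card (LatCon L) : ℝ) ≤ (2 ^ (n - 1 - k) : ℕ) := by exact_mod_cast hcard
  _ = (2 : ℝ) ^ (n - 1 - k) := by push_cast; ring
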